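/- Let L be a bounded chain (a totally ordered bounded lattice) and let g : L* → L be an associative function. The following are equivalent: (i) g is a range-idempotent polynomial function; (ii) g is a polynomial function satisfying g_2(0,0) = g_1(0) and g_2(1,1) = g_1(1); (iii) g is range-idempotent and, for every n ≥ 1, g_n is nondecreasing in each variable and the set {g_n(x y z) : y ∈ L} is convex in L for every position k and all fixed x ∈ L^{k−1}, z ∈ L^{n−k}. -/

import Mathlib

variable {X : Type*}

/-- The string consisting of the single letter `g y` if `y` is nonempty, and the
empty string if `y` is empty (the convention `g ε = ε`). -/
def strOf (g : List X → X) (y : List X) : List X :=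
  match y with
  | [] => []
  | _ => [g y]

/-- Associativity for functions on strings. -/
def AssocStar (g : List X → X) : Prop :=
  ∀ x y z x' y' z' : List X, x ++ y ++ z = x' ++ y' ++ z' →
    g (x ++ strOf g y ++ z) = g (x' ++ strOf g y' ++ z')

/-- Range-idempotency for functions on strings. -/
def RangeIdem (g : List X → X) : Prop :=
  ∀ x : List X, x ≠ [] → ∀ n : ℕ, 1 ≤ n → g (List.replicate n (g x)) = g x

/-- Application of an `n`-ary function to a list of length `n`. -/
def liftF {n : ℕ} (f : (Fin n → X) → X) (l : List X) (h : l.length = n) : X :=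
  f fun i => l.get (Fin.cast h.symm i)

/-- Associativity for `n`-ary functions. -/
def AssocFin {n : ℕ} (f : (Fin n → X) → X) : Prop :=
  ∀ (x z x' z' y y' : List X) (hy : y.length = n) (hy' : y'.length = n),
    x.length + z.length = n - 1 → x'.length + z'.length = n - 1 →
    x ++ y ++ z = x' ++ y' ++ z' →
    ∀ (h : (x ++ [liftF f y hy] ++ z).length = n)
      (h' : (x' ++ [liftF f y' hy'] ++ z').length = n),
      liftF f (x ++ [liftF f y hy] ++ z) h = liftF f (x' ++ [liftF f y' hy'] ++ z') h'

variable {L : Type*} [DistribLattice L] [BoundedOrder L]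

/-- Lattice polynomial functions: representable in disjunctive normal form. -/
def IsPolynomialFn {n : ℕ} (f : (Fin n → L) → L) : Prop :=
  ∃ α : Finset (Fin n) → L,
    ∀ x : Fin n → L, f x = Finset.univ.sup fun I : Finset (Fin n) => α I ⊓ I.inf x

/-- The ternary median. -/
def med (a b c : L) : L := (a ⊔ b) ⊓ (a ⊔ c) ⊓ (b ⊔ c)

/-- The characteristic vector of `I ⊆ [n]`. -/
def charVec {n : ℕ} (I : Finset (Fin n)) : Fin n → L := fun i => if i ∈ I then ⊤ else ⊥

/-- A function on strings all of whose `n`-ary components (`n ≥ 1`) are polynomial. -/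
def IsPolyStar (g : List L → L) : Prop :=
  ∀ n : ℕ, 1 ≤ n → IsPolynomialFn fun x : Fin n → L => g (List.ofFn x)

set_option linter.unusedSectionVars false

section Aux
variable {C : Type*} [LinearOrder C] [BoundedOrder C]

lemma strOf_nil (g : List C → C) : strOf g [] = [] := rfl

lemma strOf_ne (g : List C → C) {l : List C} (h : l ≠ []) : strOf g l = [g l] := by
  cases l with
  | nil => exact absurd rfl h
  | cons a t => rfl

variable {g : List C → C}

lemma gF1 (hg : AssocStar g) {l : List C} (h : l ≠ []) : g [g l] = g l := by
  have := hg [] l [] l [] [] (by simp)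
  simpa [strOf_ne g h, strOf_nil] using this

lemma gF2 (hg : AssocStar g) {l : List C} (h : l ≠ []) (c : C) :
    g (l ++ [c]) = g [g l, c] := by
  have := hg [] l [c] (l ++ [c]) [] [] (by simp)
  simpa [strOf_ne g h, strOf_nil] using this.symm

lemma gF2' (hg : AssocStar g) {l : List C} (h : l ≠ []) (c : C) :
    g (c :: l) = g [c, g l] := by
  have := hg [c] l [] (c :: l) [] [] (by simp)
  simpa [strOf_ne g h, strOf_nil] using this.symm

lemma gF3a (hg : AssocStar g) (a b : C) : g [g [a], b] = g [a, b] := by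
  have := hg [] [a] [b] [a] [] [b] (by simp)
  simpa [strOf_ne, strOf_nil] using this

lemma gF3b (hg : AssocStar g) (a b : C) : g [a, g [b]] = g [a, b] := by
  have := hg [a] [b] [] [a, b] [] [] (by simp)
  simpa [strOf_ne, strOf_nil] using this

lemma gF4 (hg : AssocStar g) (y z w : C) : g [g [y,z], w] = g [y, g [z,w]] := by
  have := hg [] [y,z] [w] [y] [z,w] [] (by simp)
  simpa [strOf_ne, strOf_nil] using this

lemma sup_ite_reindex {A B : Type*} [DecidableEq B] (sA : Finset A) (sB : Finset B)
    (M : A → B) (hM : ∀ a ∈ sA, M a ∈ sB) (t : A → C) (u : B → C) :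
    (sB.sup fun b => (sA.sup fun a => if M a = b then t a else ⊥) ⊓ u b) =
      sA.sup fun a => t a ⊓ u (M a) := by
  apply le_antisymm
  · apply Finset.sup_le; intro b _
    rw [Finset.sup_inf_distrib_right sA (fun a => if M a = b then t a else ⊥) (u b)]
    apply Finset.sup_le; intro a ha
    split_ifs with h
    · subst h; exact Finset.le_sup (f := fun a => t a ⊓ u (M a)) ha
    · simp
  · apply Finset.sup_le; intro a ha
    refine le_trans ?_
      (Finset.le_sup (f := fun b => (sA.sup fun a => if M a = b then t a else ⊥) ⊓ u b)
        (hM a ha))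
    have h1 : t a ≤ sA.sup fun a' => if M a' = M a then t a' else ⊥ := by
      refine le_trans ?_ (Finset.le_sup (f := fun a' => if M a' = M a then t a' else ⊥) ha)
      simp
    exact inf_le_inf_right _ h1

lemma poly_const (c : C) : IsPolynomialFn (fun _ : Fin n → C => c) := by
  refine ⟨fun I => if I = ∅ then c else ⊥, fun x => ?_⟩
  apply le_antisymm
  · have h := Finset.le_sup (f := fun I : Finset (Fin n) => (if I = ∅ then c else ⊥) ⊓ I.inf x)
      (Finset.mem_univ ∅)
    simpa using h
  · apply Finset.sup_le; intro I _; dsimp only; split_ifs <;> simp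

lemma poly_proj (j : Fin n) : IsPolynomialFn (fun x : Fin n → C => x j) := by
  refine ⟨fun I => if I = {j} then ⊤ else ⊥, fun x => ?_⟩
  apply le_antisymm
  · have h := Finset.le_sup (f := fun I : Finset (Fin n) => (if I = {j} then ⊤ else ⊥) ⊓ I.inf x)
      (Finset.mem_univ {j})
    simpa using h
  · apply Finset.sup_le; intro I _; dsimp only; split_ifs with h
    · subst h; simp
    · simp

lemma poly_sup {f h : (Fin n → C) → C} (hf : IsPolynomialFn f) (hh : IsPolynomialFn h) :
    IsPolynomialFn (fun x => f x ⊔ h x) := by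
  obtain ⟨β, hβ⟩ := hf; obtain ⟨γ, hγ⟩ := hh
  refine ⟨fun I => β I ⊔ γ I, fun x => ?_⟩
  show f x ⊔ h x = _
  rw [hβ, hγ, ← Finset.sup_sup]
  apply Finset.sup_congr rfl
  intro I _
  simp only [Pi.sup_apply]
  rw [inf_sup_right]

lemma poly_inf {f h : (Fin n → C) → C} (hf : IsPolynomialFn f) (hh : IsPolynomialFn h) :
    IsPolynomialFn (fun x => f x ⊓ h x) := by
  classical
  obtain ⟨β, hβ⟩ := hf; obtain ⟨γ, hγ⟩ := hh
  refine ⟨fun J => (Finset.univ ×ˢ Finset.univ).sup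
    fun p : Finset (Fin n) × Finset (Fin n) => if p.1 ∪ p.2 = J then β p.1 ⊓ γ p.2 else ⊥,
    fun x => ?_⟩
  show f x ⊓ h x = _
  rw [hβ, hγ]
  rw [sup_ite_reindex (Finset.univ ×ˢ Finset.univ) Finset.univ (fun p => p.1 ∪ p.2)
    (fun a _ => Finset.mem_univ _) (fun p => β p.1 ⊓ γ p.2) (fun J => J.inf x)]
  rw [Finset.sup_product_left, Finset.sup_inf_distrib_right]
  apply Finset.sup_congr rfl
  intro I _
  rw [Finset.sup_inf_distrib_left]
  apply Finset.sup_congr rfl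
  intro K _
  rw [Finset.inf_union]
  ac_rfl

lemma poly_reindex (e : Fin m → Fin n) {p : (Fin m → C) → C} (hp : IsPolynomialFn p) :
    IsPolynomialFn (fun x : Fin n → C => p (x ∘ e)) := by
  classical
  obtain ⟨β, hβ⟩ := hp
  refine ⟨fun J => Finset.univ.sup fun I : Finset (Fin m) =>
    if I.image e = J then β I else ⊥, fun x => ?_⟩
  show p (x ∘ e) = _
  rw [hβ]
  rw [sup_ite_reindex Finset.univ Finset.univ (fun I => I.image e)
    (fun a _ => Finset.mem_univ _) β (fun J => J.inf x)]
  apply Finset.sup_congr rfl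
  intro I _
  rw [Finset.inf_image]

lemma poly_finset_sup {ι : Type*} [DecidableEq ι] (s : Finset ι) (P : ι → (Fin n → C) → C)
    (h : ∀ i ∈ s, IsPolynomialFn (P i)) :
    IsPolynomialFn (fun x => s.sup fun i => P i x) := by
  induction s using Finset.induction with
  | empty => simpa using poly_const (⊥ : C)
  | insert a s hni ih =>
    simp only [Finset.sup_insert]
    exact poly_sup (h a (Finset.mem_insert_self a s))
      (ih fun i hi => h i (Finset.mem_insert_of_mem hi))

lemma poly_finset_inf {ι : Type*} [DecidableEq ι] (s : Finset ι) (P : ι → (Fin n → C) → C)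
    (h : ∀ i ∈ s, IsPolynomialFn (P i)) :
    IsPolynomialFn (fun x => s.inf fun i => P i x) := by
  induction s using Finset.induction with
  | empty => simpa using poly_const (⊤ : C)
  | insert a s hni ih =>
    simp only [Finset.inf_insert]
    exact poly_inf (h a (Finset.mem_insert_self a s))
      (ih fun i hi => h i (Finset.mem_insert_of_mem hi))

lemma poly_comp {q : (Fin m → C) → C} (hq : IsPolynomialFn q)
    {P : Fin m → (Fin n → C) → C} (hP : ∀ i, IsPolynomialFn (P i)) :
    IsPolynomialFn (fun x => q fun i => P i x) := by
  obtain ⟨α, hα⟩ := hq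
  have : (fun x => q fun i => P i x) =
      fun x => Finset.univ.sup fun I : Finset (Fin m) => α I ⊓ I.inf fun i => P i x :=
    funext fun x => hα _
  rw [this]
  apply poly_finset_sup
  intro I _
  exact poly_inf (poly_const _) (poly_finset_inf I P fun i _ => hP i)

lemma poly_monotone {f : (Fin n → C) → C} (hf : IsPolynomialFn f) : Monotone f := by
  obtain ⟨α, hα⟩ := hf
  intro x y hxy
  rw [hα, hα]
  apply Finset.sup_mono_fun
  intro I _
  exact inf_le_inf_left _ (Finset.inf_mono_fun fun i _ => hxy i)

lemma poly_update_repr {f : (Fin n → C) → C} (hf : IsPolynomialFn f) (w : Fin n → C)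
    (k : Fin n) : ∃ A B : C, ∀ y, f (Function.update w k y) = A ⊔ (B ⊓ y) := by
  classical
  obtain ⟨α, hα⟩ := hf
  set S1 := (Finset.univ.filter fun I : Finset (Fin n) => k ∉ I) with hS1
  set S2 := (Finset.univ.filter fun I : Finset (Fin n) => k ∈ I) with hS2
  refine ⟨S1.sup fun I => α I ⊓ I.inf w,
    S2.sup fun I => α I ⊓ (I.erase k).inf w, fun y => ?_⟩
  rw [hα]
  have hsplit : (Finset.univ : Finset (Finset (Fin n))) = S1 ∪ S2 := by
    ext I; simp [hS1, hS2, em']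
  conv_lhs => rw [hsplit]
  rw [Finset.sup_union]
  congr 1
  · apply Finset.sup_congr rfl
    intro I hI
    have hk : k ∉ I := by simp [hS1] at hI; exact hI
    congr 1
    apply Finset.inf_congr rfl
    intro i hi
    exact Function.update_of_ne (by rintro rfl; exact hk hi) _ _
  · rw [Finset.sup_inf_distrib_right]
    apply Finset.sup_congr rfl
    intro I hI
    have hk : k ∈ I := by simp [hS2] at hI; exact hI
    have : I.inf (Function.update w k y) = (I.erase k).inf w ⊓ y := by
      conv_lhs => rw [← Finset.insert_erase hk]
      rw [Finset.inf_insert, Function.update_self, inf_comm]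
      congr 1
      apply Finset.inf_congr rfl
      intro i hi
      exact Function.update_of_ne (Finset.ne_of_mem_erase hi) _ _
    rw [this, inf_assoc]

lemma poly_diag_repr {f : (Fin n → C) → C} (hf : IsPolynomialFn f) :
    ∃ A B : C, ∀ u, f (fun _ => u) = A ⊔ (B ⊓ u) := by
  classical
  obtain ⟨α, hα⟩ := hf
  refine ⟨α ∅, (Finset.univ.erase ∅).sup α, fun u => ?_⟩
  rw [hα]
  conv_lhs => rw [← Finset.insert_erase (Finset.mem_univ (∅ : Finset (Fin n)))]
  rw [Finset.sup_insert]
  congr 1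
  · simp
  · rw [Finset.sup_inf_distrib_right]
    apply Finset.sup_congr rfl
    intro I hI
    congr 1
    exact Finset.inf_const (Finset.nonempty_of_ne_empty (Finset.mem_erase.1 hI).1) _

lemma clamp_of (h : C → C) (mono : Monotone h) (conv : (Set.range h).OrdConnected)
    (fixr : ∀ y, h (h y) = h y) (u : C) : h u = h ⊥ ⊔ (h ⊤ ⊓ u) := by
  rcases le_total u (h ⊥) with h1 | h1
  · have e1 : h u = h ⊥ := le_antisymm (by simpa [fixr ⊥] using mono h1) (mono bot_le)
    have e2 : u ≤ h ⊤ := le_trans h1 (mono le_top)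
    rw [e1, inf_eq_right.2 e2, sup_eq_left.2 h1]
  · rcases le_total (h ⊤) u with h2 | h2
    · have e1 : h u = h ⊤ := le_antisymm (mono le_top) (by simpa [fixr ⊤] using mono h2)
      rw [e1, inf_eq_left.2 h2, sup_eq_right.2 (mono (bot_le : (⊥:C) ≤ ⊤))]
    · have hu : u ∈ Set.range h := conv.out ⟨⊥, rfl⟩ ⟨⊤, rfl⟩ ⟨h1, h2⟩
      obtain ⟨v, hv⟩ := hu
      have e1 : h u = u := by rw [← hv, fixr]
      rw [e1, inf_eq_right.2 h2, sup_eq_right.2 h1]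

lemma range_clamp (A B : C) : (Set.range fun y : C => A ⊔ (B ⊓ y)).OrdConnected := by
  have e : (Set.range fun y : C => A ⊔ (B ⊓ y)) = Set.Icc A (A ⊔ B) := by
    ext c
    constructor
    · rintro ⟨y, rfl⟩
      exact ⟨le_sup_left, sup_le_sup_left inf_le_left A⟩
    · rintro ⟨h1, h2⟩
      refine ⟨c, ?_⟩
      show A ⊔ (B ⊓ c) = c
      rcases le_total c B with h3 | h3
      · rw [inf_eq_right.2 h3, sup_eq_right.2 h1]
      · rw [inf_eq_left.2 h3]
        exact le_antisymm (sup_le h1 h3) h2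
  rw [e]
  exact Set.ordConnected_Icc

lemma ofFn1 (x : Fin 1 → C) : List.ofFn x = [x 0] := by simp [List.ofFn_succ]

lemma ofFn2 (x : Fin 2 → C) : List.ofFn x = [x 0, x 1] := by simp [List.ofFn_succ]

section MainLemmas
variable {g : List C → C}

lemma diag1_repr (hps : IsPolyStar g) :
    ∃ A B : C, ∀ u : C, g [u] = A ⊔ (B ⊓ u) := by
  obtain ⟨A, B, h⟩ := poly_diag_repr (hps 1 le_rfl)
  exact ⟨A, B, fun u => by simpa [ofFn1] using h u⟩

lemma diag2_repr (hps : IsPolyStar g) :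
    ∃ A B : C, ∀ u : C, g [u, u] = A ⊔ (B ⊓ u) := by
  obtain ⟨A, B, h⟩ := poly_diag_repr (hps 2 (by norm_num))
  exact ⟨A, B, fun u => by simpa [ofFn2] using h u⟩

lemma bdry_of (hg : AssocStar g) (hri : RangeIdem g) (hps : IsPolyStar g) :
    g [⊥, ⊥] = g [⊥] ∧ g [⊤, ⊤] = g [⊤] := by
  obtain ⟨A1, B1, d1⟩ := diag1_repr hps
  obtain ⟨A2, B2, d2⟩ := diag2_repr hps
  have repb : g [g [⊥], g [⊥]] = g [⊥] := hri [⊥] (by simp) 2 (by norm_num)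
  have rept : g [g [⊤], g [⊤]] = g [⊤] := hri [⊤] (by simp) 2 (by norm_num)
  constructor
  · apply le_antisymm
    · have e : g [⊥, ⊥] = A2 := by simpa using d2 ⊥
      rw [e]
      calc A2 ≤ A2 ⊔ (B2 ⊓ g [⊥]) := le_sup_left
        _ = g [g [⊥], g [⊥]] := (d2 _).symm
        _ = g [⊥] := repb
    · have e : g [⊥] = A1 := by simpa using d1 ⊥
      rw [e]
      calc A1 ≤ A1 ⊔ (B1 ⊓ g [⊥, ⊥]) := le_sup_left
        _ = g [g [⊥, ⊥]] := (d1 _).symm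
        _ = g [⊥, ⊥] := gF1 hg (by simp)
  · apply le_antisymm
    · calc g [⊤, ⊤] = g [g [⊤, ⊤]] := (gF1 hg (by simp)).symm
        _ = A1 ⊔ (B1 ⊓ g [⊤, ⊤]) := d1 _
        _ ≤ A1 ⊔ (B1 ⊓ ⊤) := sup_le_sup_left (inf_le_inf_left _ le_top) _
        _ = g [⊤] := (d1 ⊤).symm
    · calc g [⊤] = g [g [⊤], g [⊤]] := rept.symm
        _ = A2 ⊔ (B2 ⊓ g [⊤]) := d2 _
        _ ≤ A2 ⊔ (B2 ⊓ ⊤) := sup_le_sup_left (inf_le_inf_left _ le_top) _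
        _ = g [⊤, ⊤] := (d2 ⊤).symm

lemma ri_of_bdry (hg : AssocStar g) (hps : IsPolyStar g)
    (hb : g [⊥, ⊥] = g [⊥]) (ht : g [⊤, ⊤] = g [⊤]) : RangeIdem g := by
  obtain ⟨A1, B1, d1⟩ := diag1_repr hps
  obtain ⟨A2, B2, d2⟩ := diag2_repr hps
  have eb : A2 = A1 := by
    have e1 : g [⊥, ⊥] = A2 := by simpa using d2 ⊥
    have e2 : g [⊥] = A1 := by simpa using d1 ⊥
    rw [← e1, ← e2, hb]
  have et : A2 ⊔ B2 = A1 ⊔ B1 := by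
    have e1 : g [⊤, ⊤] = A2 ⊔ B2 := by simpa using d2 ⊤
    have e2 : g [⊤] = A1 ⊔ B1 := by simpa using d1 ⊤
    rw [← e1, ← e2, ht]
  have key : ∀ u : C, g [u, u] = g [u] := by
    intro u
    rw [d2, d1, sup_inf_left, sup_inf_left, et, eb]
  intro x hx n hn
  have fix1 : g [g x] = g x := gF1 hg hx
  obtain ⟨k, rfl⟩ : ∃ k, n = k + 1 := ⟨n - 1, by omega⟩
  clear hn
  induction k with
  | zero => simpa using fix1
  | succ k ih =>
    rw [List.replicate_succ', gF2 hg (by simp) (g x), ih, key, fix1]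

lemma iii_of_poly (hps : IsPolyStar g) : ∀ n : ℕ, 1 ≤ n →
    (Monotone fun x : Fin n → C => g (List.ofFn x)) ∧
    (∀ (w : Fin n → C) (k : Fin n),
      (Set.range fun y : C => g (List.ofFn (Function.update w k y))).OrdConnected) := by
  intro n hn
  refine ⟨poly_monotone (hps n hn), fun w k => ?_⟩
  obtain ⟨A, B, hAB⟩ := poly_update_repr (hps n hn) w k
  have e : (fun y : C => g (List.ofFn (Function.update w k y))) = fun y => A ⊔ (B ⊓ y) :=
    funext fun y => hAB y
  rw [e]
  exact range_clamp A B

lemma poly_of_iii (hg : AssocStar g) (hri : RangeIdem g)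
    (hmc : ∀ n : ℕ, 1 ≤ n →
      (Monotone fun x : Fin n → C => g (List.ofFn x)) ∧
      (∀ (w : Fin n → C) (k : Fin n),
        (Set.range fun y : C => g (List.ofFn (Function.update w k y))).OrdConnected)) :
    IsPolyStar g := by
  have idem : ∀ l : List C, l ≠ [] → g [g l, g l] = g l := fun l hl => hri l hl 2 (by norm_num)
  -- unary
  have mono1 := (hmc 1 le_rfl).1
  have conv1 := (hmc 1 le_rfl).2
  have hmono1 : Monotone fun u : C => g [u] := by
    intro u v huv
    have := mono1 (a := fun _ : Fin 1 => u) (b := fun _ => v) (fun _ => huv)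
    simpa [ofFn1] using this
  have hconv1 : (Set.range fun u : C => g [u]).OrdConnected := by
    have h := conv1 (fun _ => ⊥) 0
    have e : (fun y : C => g (List.ofFn (Function.update (fun _ : Fin 1 => (⊥:C)) 0 y))) =
        fun y => g [y] := by
      funext y
      simp [List.ofFn_succ, Function.update_apply]
    rwa [e] at h
  have hfix1 : ∀ u : C, g [g [u]] = g [u] := fun u => gF1 hg (by simp)
  have hclamp1 : ∀ u : C, g [u] = g [⊥] ⊔ (g [⊤] ⊓ u) :=
    clamp_of _ hmono1 hconv1 hfix1
  have p1 : IsPolynomialFn fun x : Fin 1 → C => g (List.ofFn x) := by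
    refine ⟨fun I => if I = ∅ then g [⊥] else g [⊤], fun x => ?_⟩
    show g (List.ofFn x) = _
    have huniv : (Finset.univ : Finset (Finset (Fin 1))) = {∅, {0}} := by decide
    rw [huniv]
    rw [show ({∅, {0}} : Finset (Finset (Fin 1))) =
      insert ∅ {({0} : Finset (Fin 1))} from rfl]
    rw [Finset.sup_insert, Finset.sup_singleton, ofFn1, hclamp1 (x 0)]
    simp
  -- binary
  have mono2 := (hmc 2 (by norm_num)).1
  have conv2 := (hmc 2 (by norm_num)).2
  have hmono2 : ∀ {y y' z z' : C}, y ≤ y' → z ≤ z' → g [y, z] ≤ g [y', z'] := by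
    intro y y' z z' h1 h2
    have hle : (![y, z] : Fin 2 → C) ≤ ![y', z'] := by
      intro i; fin_cases i <;> simpa
    have := mono2 hle
    simpa [List.ofFn_succ] using this
  have hconvY : ∀ z : C, (Set.range fun y : C => g [y, z]).OrdConnected := by
    intro z
    have h := conv2 ![⊥, z] 0
    have e : (fun y : C => g (List.ofFn (Function.update ![(⊥:C), z] 0 y))) =
        fun y => g [y, z] := by
      funext y
      simp [List.ofFn_succ, Function.update_apply]
    rwa [e] at h
  have hconvZ : ∀ y : C, (Set.range fun z : C => g [y, z]).OrdConnected := by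
    intro y
    have h := conv2 ![y, ⊥] 1
    have e : (fun z : C => g (List.ofFn (Function.update ![y, (⊥:C)] 1 z))) =
        fun z => g [y, z] := by
      funext z
      simp [List.ofFn_succ, Function.update_apply]
    rwa [e] at h
  have fixY : ∀ y z : C, g [g [y, z], z] = g [y, z] := by
    intro y z
    have e1 : g [y, g [z]] = g [y, z] := gF3b hg y z
    have e2 : g [g [y, z], g [z]] = g [g [y, z], z] := gF3b hg _ z
    have e3 : g [g [y, g [z]], g [z]] = g [y, g [g [z], g [z]]] := gF4 hg _ _ _
    have e4 : g [g [z], g [z]] = g [z] := idem [z] (by simp)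
    calc g [g [y, z], z] = g [g [y, g [z]], g [z]] := by rw [e1, e2]
      _ = g [y, g [g [z], g [z]]] := e3
      _ = g [y, g [z]] := by rw [e4]
      _ = g [y, z] := e1
  have fixZ : ∀ y z : C, g [y, g [y, z]] = g [y, z] := by
    intro y z
    have e1 : g [g [y], z] = g [y, z] := gF3a hg y z
    have e2 : g [g [y], g [y, z]] = g [y, g [y, z]] := gF3a hg _ _
    have e3 : g [g [g [y], g [y]], z] = g [g [y], g [g [y], z]] := gF4 hg _ _ _
    have e4 : g [g [y], g [y]] = g [y] := idem [y] (by simp)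
    calc g [y, g [y, z]] = g [g [y], g [g [y], z]] := by rw [e1, e2]
      _ = g [g [g [y], g [y]], z] := e3.symm
      _ = g [g [y], z] := by rw [e4]
      _ = g [y, z] := e1
  have clampY : ∀ z y : C, g [y, z] = g [⊥, z] ⊔ (g [⊤, z] ⊓ y) := fun z y =>
    clamp_of (fun y => g [y, z]) (fun _ _ hab => hmono2 hab le_rfl) (hconvY z)
      (fun u => fixY u z) y
  have clampZ : ∀ y z : C, g [y, z] = g [y, ⊥] ⊔ (g [y, ⊤] ⊓ z) := fun y z =>
    clamp_of (fun z => g [y, z]) (fun _ _ hab => hmono2 le_rfl hab) (hconvZ y)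
      (fun u => fixZ y u) z
  have main2 : ∀ y z : C, g [y, z] =
      (g [⊥, ⊥] ⊔ (g [⊥, ⊤] ⊓ z)) ⊔ ((g [⊤, ⊥] ⊔ (g [⊤, ⊤] ⊓ z)) ⊓ y) := by
    intro y z
    rw [clampY z y, clampZ ⊥ z, clampZ ⊤ z]
  have p2 : IsPolynomialFn fun x : Fin 2 → C => g (List.ofFn x) := by
    refine ⟨fun I => g [if (0:Fin 2) ∈ I then ⊤ else ⊥, if (1:Fin 2) ∈ I then ⊤ else ⊥],
      fun x => ?_⟩
    show g (List.ofFn x) = _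
    have huniv : (Finset.univ : Finset (Finset (Fin 2))) = {∅, {0}, {1}, {0,1}} := by decide
    rw [ofFn2, huniv]
    rw [show ({∅, {0}, {1}, {0,1}} : Finset (Finset (Fin 2))) =
      insert ∅ (insert {0} (insert {1} {({0,1} : Finset (Fin 2))})) from rfl]
    rw [Finset.sup_insert, Finset.sup_insert, Finset.sup_insert, Finset.sup_singleton]
    rw [main2 (x 0) (x 1)]
    simp only [Finset.mem_insert, Finset.mem_singleton, Finset.notMem_empty, Finset.inf_insert,
      Finset.inf_singleton, Finset.inf_empty, if_true, if_false]
    norm_num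
    rw [inf_sup_right]
    ac_rfl
  -- induction step
  have pstep : ∀ n : ℕ, 1 ≤ n →
      IsPolynomialFn (fun x : Fin n → C => g (List.ofFn x)) →
      IsPolynomialFn (fun x : Fin (n+1) → C => g (List.ofFn x)) := by
    intro n hn hp
    have hQ : IsPolynomialFn (fun x : Fin (n+1) → C => g (List.ofFn (x ∘ Fin.succ))) :=
      poly_reindex Fin.succ hp
    have hcomp := poly_comp (n := n+1) p2 (P := fun i : Fin 2 =>
      if i = 0 then (fun x : Fin (n+1) → C => x 0)
      else fun x : Fin (n+1) → C => g (List.ofFn (x ∘ Fin.succ))) ?_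
    · have e : (fun x : Fin (n+1) → C => g (List.ofFn x)) = fun x =>
          (fun y : Fin 2 → C => g (List.ofFn y)) (fun i : Fin 2 =>
            (if i = 0 then (fun x : Fin (n+1) → C => x 0)
            else fun x : Fin (n+1) → C => g (List.ofFn (x ∘ Fin.succ))) x) := by
        funext x
        have hne : (List.ofFn fun i : Fin n => x i.succ) ≠ [] := by
          simp only [ne_eq, List.ofFn_eq_nil_iff]
          omega
        have lhs : g (List.ofFn x) = g [x 0, g (List.ofFn fun i : Fin n => x i.succ)] := by
          conv_lhs => rw [List.ofFn_succ]
          exact gF2' hg hne (x 0)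
        rw [lhs]
        simp [List.ofFn_succ, Function.comp_def]
      rw [e]
      exact hcomp
    · intro i
      by_cases hi : i = 0
      · rw [if_pos hi]
        exact poly_proj 0
      · rw [if_neg hi]
        exact hQ
  intro n hn
  induction n, hn using Nat.le_induction with
  | base => exact p1
  | succ n hn ih => exact pstep n hn ih

end MainLemmas
end Aux

/-- for a bounded chain `L` and an associative `g : L* → L`, the following
are equivalent: (i) `g` is a range-idempotent polynomial function; (ii) `g` is a
polynomial function with `g₂(0,0) = g₁(0)` and `g₂(1,1) = g₁(1)`; (iii) `g` is
range-idempotent and each `gₙ` is nondecreasing and convex-ranged in each variable. -/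
theorem stmt18 {C : Type*} [LinearOrder C] [BoundedOrder C]
    (g : List C → C) (hg : AssocStar g) :
    ((RangeIdem g ∧ IsPolyStar g) ↔
        (IsPolyStar g ∧ g [⊥, ⊥] = g [⊥] ∧ g [⊤, ⊤] = g [⊤])) ∧
    ((RangeIdem g ∧ IsPolyStar g) ↔
        (RangeIdem g ∧ ∀ n : ℕ, 1 ≤ n →
          (Monotone fun x : Fin n → C => g (List.ofFn x)) ∧
          (∀ (w : Fin n → C) (k : Fin n),
            (Set.range fun y : C => g (List.ofFn (Function.update w k y))).OrdConnected))) := by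
  constructor
  · constructor
    · rintro ⟨hri, hps⟩
      exact ⟨hps, (bdry_of hg hri hps).1, (bdry_of hg hri hps).2⟩
    · rintro ⟨hps, hb, ht⟩
      exact ⟨ri_of_bdry hg hps hb ht, hps⟩
  · constructor
    · rintro ⟨hri, hps⟩
      exact ⟨hri, iii_of_poly hps⟩
    · rintro ⟨hri, hmc⟩
      exact ⟨hri, poly_of_iii hg hri hmc⟩
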